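/- Let X be a real Banach space with weak-ANP-III, i.e., every sequence (x_n) in the unit sphere S_X that is asymptotically normed by B_{X*} (meaning: for every ε > 0 there exists f in the closed unit ball of X* such that f(x_n) > 1 − ε for all but finitely many n) satisfies ⋂_{n} closure(convexHull{x_k : k ≥ n}) ≠ ∅ (norm closure). Then X is reflexive. -/

import Mathlib

open NormedSpace Filter Topology Set

section Aux

private noncomputable abbrev Dual (𝕜 : Type*) [NontriviallyNormedField 𝕜] (E : Type*)
    [SeminormedAddCommGroup E] [NormedSpace 𝕜 E] := StrongDual 𝕜 E

private noncomputable def buildSeq {α : Type*} (step : ∀ n : ℕ, (Fin n → α) → α) : ℕ → α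
  | n => step n fun i => buildSeq step i
termination_by n => n
decreasing_by exact i.isLt

private lemma buildSeq_eq {α : Type*} (step : ∀ n : ℕ, (Fin n → α) → α) (n : ℕ) :
    buildSeq step n = step n fun i => buildSeq step i := by
  rw [buildSeq]

private lemma my_helly {E : Type*} [NormedAddCommGroup E] [NormedSpace ℝ E]
    (Φ : Dual ℝ (Dual ℝ E)) (hΦ : ‖Φ‖ ≤ 1) {ι : Type} [Fintype ι]
    (f : ι → Dual ℝ E) {ε : ℝ} (hε : 0 < ε) :
    ∃ x : E, ‖x‖ ≤ 1 + ε ∧ ∀ j, |f j x - Φ (f j)| < ε := by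
  classical
  by_contra hc
  push_neg at hc
  set T : E →L[ℝ] (ι → ℝ) := ContinuousLinearMap.pi f with hT
  set c : ι → ℝ := fun j => Φ (f j) with hcdef
  set D : Set (ι → ℝ) := T '' (Metric.closedBall 0 (1 + ε)) with hD
  have hcD : c ∉ closure D := by
    intro hmem
    rw [Metric.mem_closure_iff] at hmem
    obtain ⟨y, ⟨x, hx, rfl⟩, hy⟩ := hmem ε hε
    obtain ⟨j, hj⟩ := hc x (by simpa [Metric.mem_closedBall, dist_zero_right] using hx)
    have : dist (c j) (T x j) < ε := lt_of_le_of_lt (dist_le_pi_dist c (T x) j) hy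
    rw [Real.dist_eq] at this
    have : |f j x - c j| < ε := by
      rw [abs_sub_comm]
      simpa [hT] using this
    exact absurd this (not_lt.mpr hj)
  have hDconv : Convex ℝ (closure D) :=
    ((convex_closedBall (0:E) (1+ε)).linear_image (T : E →ₗ[ℝ] (ι → ℝ))).closure
  obtain ⟨φ, u, hs, hu⟩ := geometric_hahn_banach_closed_point hDconv isClosed_closure hcD
  have h0D : (0 : ι → ℝ) ∈ closure D :=
    subset_closure ⟨0, Metric.mem_closedBall_self (by positivity), by simp⟩
  have hupos : 0 < u := by simpa using hs 0 h0D
  set g : E →L[ℝ] ℝ := φ.comp T with hg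
  have hgball : ∀ x : E, ‖x‖ ≤ 1 + ε → g x < u := fun x hx =>
    hs (T x) (subset_closure ⟨x, by simpa [Metric.mem_closedBall, dist_zero_right] using hx, rfl⟩)
  have hgnorm : ‖g‖ ≤ u / (1 + ε) := by
    apply ContinuousLinearMap.opNorm_le_bound g (by positivity)
    intro x
    rcases eq_or_ne x 0 with rfl | hx0
    · simp
    · have hxn : (0:ℝ) < ‖x‖ := norm_pos_iff.mpr hx0
      set r : ℝ := (1 + ε) / ‖x‖ with hr
      have hrpos : 0 < r := by positivity
      have hxr : ‖r • x‖ = 1 + ε := by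
        rw [norm_smul, Real.norm_eq_abs, abs_of_pos hrpos, hr]
        field_simp
      have h1 : g (r • x) < u := hgball _ hxr.le
      have h2 : g (-(r • x)) < u := hgball _ (by rw [norm_neg]; exact hxr.le)
      have habs : |g (r • x)| ≤ u := by
        rw [abs_le]; constructor
        · have := h2; rw [map_neg] at this; linarith
        · linarith
      have hgr : g (r • x) = r * g x := by simp
      rw [hgr, abs_mul, abs_of_pos hrpos] at habs
      rw [Real.norm_eq_abs]
      calc |g x| = (r * |g x|) * ‖x‖ / (1 + ε) := by rw [hr]; field_simp
        _ ≤ u * ‖x‖ / (1 + ε) := by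
            apply div_le_div_of_nonneg_right ?_ (by positivity) |>.trans_eq rfl
            exact mul_le_mul_of_nonneg_right habs (norm_nonneg x)
        _ = u / (1 + ε) * ‖x‖ := by ring
  -- identify Φ g with φ c
  set e : ι → (ι → ℝ) := fun i => fun j => if i = j then (1:ℝ) else 0 with he
  set a : ι → ℝ := fun i => φ (e i) with ha
  have hφ : ∀ y : ι → ℝ, φ y = ∑ j, y j * a j := by
    intro y
    conv_lhs => rw [pi_eq_sum_univ y]
    rw [map_sum]
    exact Finset.sum_congr rfl fun j _ => by rw [map_smul]; rfl
  have hgsum : g = ∑ j, a j • f j := by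
    ext x
    rw [ContinuousLinearMap.sum_apply]
    have : g x = φ (T x) := rfl
    rw [this, hφ]
    exact Finset.sum_congr rfl fun j _ => by
      simp [hT, ContinuousLinearMap.smul_apply, mul_comm]
  have hΦg : Φ g = φ c := by
    rw [hgsum, map_sum, hφ c]
    exact Finset.sum_congr rfl fun j _ => by
      rw [map_smul]
      simp [hcdef, mul_comm]
  have hΦgle : Φ g ≤ u / (1 + ε) := by
    calc Φ g ≤ |Φ g| := le_abs_self _
      _ ≤ ‖Φ‖ * ‖g‖ := by
          simpa [Real.norm_eq_abs] using Φ.le_opNorm g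
      _ ≤ 1 * (u / (1 + ε)) := by
          apply mul_le_mul hΦ hgnorm (norm_nonneg g) zero_le_one
      _ = u / (1 + ε) := one_mul _
  have : u < u / (1 + ε) := lt_of_lt_of_le (hΦg ▸ hu) hΦgle
  have : u / (1 + ε) < u := by
    rw [div_lt_iff₀ (by positivity)]
    nlinarith
  linarith

end Aux

set_option maxHeartbeats 2000000 in
theorem stmt_0 {X : Type*} [NormedAddCommGroup X] [NormedSpace ℝ X] [CompleteSpace X]
    (h : ∀ x : ℕ → X, (∀ n, ‖x n‖ = 1) →
      (∀ ε : ℝ, 0 < ε → ∃ f : StrongDual ℝ X, ‖f‖ ≤ 1 ∧ ∀ᶠ n in atTop, 1 - ε < f (x n)) →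
      (⋂ n : ℕ, closure (convexHull ℝ (x '' Set.Ici n))).Nonempty) :
    Function.Surjective (inclusionInDoubleDual ℝ X) := by
  classical
  set J := inclusionInDoubleDual ℝ X with hJdef
  by_contra hsurj
  simp only [Function.Surjective, not_forall] at hsurj
  obtain ⟨F₀, hF₀⟩ := hsurj
  push_neg at hF₀
  -- the sequence δ
  set δ : ℕ → ℝ := fun n => 1 / (n + 3) with hδdef
  have δpos : ∀ n, 0 < δ n := fun n => by positivity
  have δle : ∀ n, δ n ≤ 1 / 3 := fun n => by
    simp only [hδdef]
    rw [div_le_div_iff₀ (by positivity) (by norm_num)]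
    push_cast; linarith [Nat.cast_nonneg (α := ℝ) n]
  have δanti : ∀ {m n : ℕ}, m ≤ n → δ n ≤ δ m := fun {m n} hmn => by
    simp only [hδdef]
    apply one_div_le_one_div_of_le (by positivity)
    push_cast; exact_mod_cast by linarith [Nat.cast_le (α := ℝ) |>.mpr hmn]
  have δsmall : ∀ ε : ℝ, 0 < ε → ∃ N, δ N < ε := by
    intro ε hε
    obtain ⟨N, hN⟩ := exists_nat_gt (1 / ε)
    refine ⟨N, ?_⟩
    rw [hδdef]
    rw [div_lt_iff₀ (by positivity)]
    have h1 : 1 / ε < (N : ℝ) + 3 := by linarith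
    have h2 := (div_lt_iff₀ hε).mp h1
    nlinarith
  -- the range of J
  set R : Set (Dual ℝ (Dual ℝ X)) := Set.range ⇑J with hRdef
  have hR0 : F₀ ∉ R := by rintro ⟨x, rfl⟩; exact hF₀ x rfl
  have hF₀0 : F₀ ≠ 0 := by rintro rfl; exact hR0 ⟨0, map_zero _⟩
  set F : Dual ℝ (Dual ℝ X) := ‖F₀‖⁻¹ • F₀ with hFdef
  have hF₀n : ‖F₀‖ ≠ 0 := fun hc => hF₀0 ((ContinuousLinearMap.opNorm_zero_iff _).mp hc)
  have hFnorm : ‖F‖ = 1 := by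
    rw [hFdef, norm_smul, norm_inv, Real.norm_eq_abs, abs_of_nonneg (ContinuousLinearMap.opNorm_nonneg _)]
    exact inv_mul_cancel₀ hF₀n
  have hFR : F ∉ R := by
    rintro ⟨x, hx⟩
    apply hR0
    refine ⟨‖F₀‖ • x, ?_⟩
    rw [map_smul, hx, hFdef, smul_inv_smul₀ hF₀n]
  have hconv : Convex ℝ R := by
    rw [hRdef, ← Set.image_univ]
    exact convex_univ.linear_image (J : X →ₗ[ℝ] Dual ℝ (Dual ℝ X))
  have hclosed : IsClosed R := by
    have hiso : Isometry ⇑J := (inclusionInDoubleDualLi ℝ (E := X)).isometry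
    exact hiso.isClosedEmbedding.isClosed_range
  obtain ⟨φ, u, hsφ, huφ⟩ := geometric_hahn_banach_closed_point hconv hclosed hFR
  have hu0 : 0 < u := by simpa using hsφ (J 0) ⟨0, rfl⟩
  have hφ0 : ∀ x : X, φ (J x) = 0 := by
    intro x
    by_contra hne
    have key : (2 * u / φ (J x)) * φ (J x) < u := by
      have := hsφ (J ((2 * u / φ (J x)) • x)) ⟨_, rfl⟩
      rwa [map_smul, map_smul, smul_eq_mul] at this
    rw [div_mul_cancel₀ _ hne] at key
    linarith
  have hφF : 0 < φ F := lt_trans hu0 huφ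
  have hφne : φ ≠ 0 := fun hc => by rw [hc] at hφF; simp at hφF
  have hφnorm : 0 < ‖φ‖ := by
    have h1 := φ.le_opNorm F
    rw [hFnorm, mul_one, Real.norm_eq_abs] at h1
    have h2 : φ F ≤ |φ F| := le_abs_self _
    linarith
  set Φ : Dual ℝ (Dual ℝ (Dual ℝ X)) := ‖φ‖⁻¹ • φ with hΦdef
  have hΦnorm : ‖Φ‖ ≤ 1 := by
    rw [hΦdef, norm_smul, norm_inv, Real.norm_eq_abs, abs_of_nonneg (ContinuousLinearMap.opNorm_nonneg _), inv_mul_cancel₀ (ne_of_gt hφnorm)]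
  have hΦJ : ∀ x : X, Φ (J x) = 0 := fun x => by
    rw [hΦdef, ContinuousLinearMap.smul_apply, hφ0, smul_zero]
  have hd : 0 < Φ F := by
    rw [hΦdef, ContinuousLinearMap.smul_apply, smul_eq_mul]
    positivity
  -- the norming functionals f n
  have hfex : ∀ n : ℕ, ∃ fn : Dual ℝ X, ‖fn‖ ≤ 1 ∧ 1 - δ n < F fn := by
    intro n
    have h1 : 1 - δ n < ‖F‖ := by rw [hFnorm]; linarith [δpos n]
    obtain ⟨f', hf'1, hf'2⟩ := F.exists_lt_apply_of_lt_opNorm h1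
    rw [Real.norm_eq_abs] at hf'2
    rcases le_or_gt 0 (F f') with hpos | hneg
    · exact ⟨f', hf'1.le, by rwa [abs_of_nonneg hpos] at hf'2⟩
    · refine ⟨-f', by rw [norm_neg]; exact hf'1.le, ?_⟩
      rw [map_neg]
      rwa [abs_of_neg hneg] at hf'2
  choose f hf1 hf2 using hfex
  -- the recursive construction
  have step : ∀ n : ℕ, ∀ prev : Fin n → X × Dual ℝ X, ∃ xg : X × Dual ℝ X,
      ‖xg.1‖ ≤ 1 + δ n ∧
      (∀ i : ℕ, i ≤ n → |f i xg.1 - F (f i)| < δ n) ∧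
      (∀ i : Fin n, |(prev i).2 xg.1 - F ((prev i).2)| < δ n) ∧
      ‖xg.2‖ ≤ 1 + δ n ∧ |F xg.2 - Φ F| < δ n ∧
      (∀ i : Fin n, |xg.2 ((prev i).1)| < δ n) ∧ |xg.2 xg.1| < δ n := by
    intro n prev
    obtain ⟨x, hx1, hx2⟩ := my_helly F (le_of_eq hFnorm) (ι := Fin (n+1) ⊕ Fin n)
        (Sum.elim (fun i => f i) (fun i => (prev i).2)) (δpos n)
    obtain ⟨g, hg1, hg2⟩ := my_helly (E := Dual ℝ X) Φ hΦnorm (ι := Fin (n+1) ⊕ Unit)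
        (Sum.elim (fun i => J ((Fin.snoc (fun i : Fin n => (prev i).1) x : Fin (n+1) → X) i)) (fun _ => F))
        (δpos n)
    refine ⟨(x, g), hx1, ?_, ?_, hg1, ?_, ?_, ?_⟩
    · intro i hi
      have := hx2 (Sum.inl ⟨i, Nat.lt_succ_of_le hi⟩)
      simpa using this
    · intro i
      have := hx2 (Sum.inr i)
      simpa using this
    · have := hg2 (Sum.inr ())
      simpa using this
    · intro i
      have := hg2 (Sum.inl i.castSucc)
      simp only [Sum.elim_inl, Fin.snoc_castSucc] at this
      rwa [dual_def, hΦJ, sub_zero] at this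
    · have := hg2 (Sum.inl (Fin.last n))
      simp only [Sum.elim_inl, Fin.snoc_last] at this
      rwa [dual_def, hΦJ, sub_zero] at this
  set stepF : ∀ n : ℕ, (Fin n → X × Dual ℝ X) → X × Dual ℝ X :=
    fun n prev => (step n prev).choose with hstepF
  set p : ℕ → X × Dual ℝ X := buildSeq stepF with hpdef
  have hp : ∀ n, p n = (step n (fun i : Fin n => p i)).choose := fun n => buildSeq_eq stepF n
  set x : ℕ → X := fun n => (p n).1 with hxdef
  set g : ℕ → Dual ℝ X := fun n => (p n).2 with hgdef
  have spec : ∀ n : ℕ,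
      ‖x n‖ ≤ 1 + δ n ∧
      (∀ i : ℕ, i ≤ n → |f i (x n) - F (f i)| < δ n) ∧
      (∀ i : Fin n, |g i (x n) - F (g i)| < δ n) ∧
      ‖g n‖ ≤ 1 + δ n ∧ |F (g n) - Φ F| < δ n ∧
      (∀ i : Fin n, |g n (x i)| < δ n) ∧ |g n (x n)| < δ n := by
    intro n
    have hspec := (step n (fun i : Fin n => p i)).choose_spec
    rw [← hp n] at hspec
    exact hspec
  have hx_norm : ∀ n, ‖x n‖ ≤ 1 + δ n := fun n => (spec n).1
  have hfx : ∀ n, ∀ i : ℕ, i ≤ n → |f i (x n) - F (f i)| < δ n := fun n => (spec n).2.1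
  have hgx : ∀ i n : ℕ, i < n → |g i (x n) - F (g i)| < δ n :=
    fun i n hin => (spec n).2.2.1 ⟨i, hin⟩
  have hg_norm : ∀ n, ‖g n‖ ≤ 2 := fun n => le_trans (spec n).2.2.2.1 (by linarith [δle n])
  have hFg : ∀ n, |F (g n) - Φ F| < δ n := fun n => (spec n).2.2.2.2.1
  have hkill : ∀ n i : ℕ, i ≤ n → |g n (x i)| < δ n := by
    intro n i hi
    rcases lt_or_eq_of_le hi with hlt | rfl
    · exact (spec n).2.2.2.2.2.1 ⟨i, hlt⟩
    · exact (spec i).2.2.2.2.2.2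
  -- lower bound on ‖x n‖
  have hx_low : ∀ n, 1 - 2 * δ n ≤ ‖x n‖ := by
    intro n
    have h1 := hfx n n le_rfl
    rw [abs_lt] at h1
    have h2 : 1 - 2 * δ n < f n (x n) := by linarith [hf2 n]
    have h3 : f n (x n) ≤ ‖x n‖ := by
      calc f n (x n) ≤ |f n (x n)| := le_abs_self _
        _ ≤ ‖f n‖ * ‖x n‖ := by
            simpa [Real.norm_eq_abs] using (f n).le_opNorm (x n)
        _ ≤ 1 * ‖x n‖ := mul_le_mul_of_nonneg_right (hf1 n) (norm_nonneg _)
        _ = ‖x n‖ := one_mul _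
    linarith
  have hx_pos : ∀ n, 0 < ‖x n‖ := fun n => lt_of_lt_of_le (by linarith [δle n]) (hx_low n)
  set y : ℕ → X := fun n => ‖x n‖⁻¹ • x n with hydef
  have hy_norm : ∀ n, ‖y n‖ = 1 := by
    intro n
    rw [hydef]
    simp only [norm_smul, norm_inv, norm_norm]
    exact inv_mul_cancel₀ (ne_of_gt (hx_pos n))
  have hyx : ∀ n, ‖y n - x n‖ ≤ 2 * δ n := by
    intro n
    have h1 : y n - x n = (‖x n‖⁻¹ - 1) • x n := by rw [hydef]; rw [sub_smul, one_smul]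
    rw [h1, norm_smul, Real.norm_eq_abs, ← abs_of_pos (hx_pos n), ← abs_mul]
    rw [abs_of_pos (hx_pos n), sub_mul, inv_mul_cancel₀ (ne_of_gt (hx_pos n)), one_mul]
    rw [abs_le]
    constructor <;> [skip; skip] <;> [linarith [hx_norm n, δpos n]; linarith [hx_low n, δpos n]]
  -- asymptotic norming
  have hAN : ∀ ε : ℝ, 0 < ε → ∃ fn : Dual ℝ X, ‖fn‖ ≤ 1 ∧ ∀ᶠ n in atTop, 1 - ε < fn (y n) := by
    intro ε hε
    obtain ⟨i, hi⟩ := δsmall (ε / 4) (by positivity)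
    refine ⟨f i, hf1 i, ?_⟩
    filter_upwards [eventually_ge_atTop i] with n hn
    have h1 := hfx n i hn
    rw [abs_lt] at h1
    have h2 : |f i (y n) - f i (x n)| ≤ 2 * δ n := by
      rw [← map_sub]
      calc |f i (y n - x n)| ≤ ‖f i‖ * ‖y n - x n‖ := by
            simpa [Real.norm_eq_abs] using (f i).le_opNorm (y n - x n)
        _ ≤ 1 * (2 * δ n) := mul_le_mul (hf1 i) (hyx n) (norm_nonneg _) zero_le_one
        _ = 2 * δ n := one_mul _
    rw [abs_le] at h2
    have h3 : δ n ≤ δ i := δanti hn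
    have h4 := hf2 i
    linarith
  obtain ⟨z, hz⟩ := h y hy_norm hAN
  have hzN : ∀ N : ℕ, z ∈ closure (convexHull ℝ (y '' Set.Ici N)) := by
    intro N
    exact Set.mem_iInter.mp hz N
  -- tail estimate
  have hA : ∀ m : ℕ, |g m z - F (g m)| ≤ 5 * δ (m + 1) := by
    intro m
    set A : Set X := {v | |g m v - F (g m)| ≤ 5 * δ (m + 1)} with hAdef
    have hApre : A = ⇑(g m) ⁻¹' (Metric.closedBall (F (g m)) (5 * δ (m + 1))) := by
      ext v
      simp [hAdef, Metric.mem_closedBall, Real.dist_eq]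
    have hAconv : Convex ℝ A := by
      rw [hApre]
      exact (convex_closedBall _ _).linear_preimage ((g m) : X →ₗ[ℝ] ℝ)
    have hAclosed : IsClosed A := by
      rw [hApre]
      exact Metric.isClosed_closedBall.preimage (g m).continuous
    have hsub : closure (convexHull ℝ (y '' Set.Ici (m + 1))) ⊆ A := by
      apply closure_minimal (convexHull_min ?_ hAconv) hAclosed
      rintro v ⟨k, hk, rfl⟩
      have hk' : m < k := hk
      have h1 := hgx m k hk'
      have h2 : |g m (y k) - g m (x k)| ≤ 2 * (2 * δ k) := by
        rw [← map_sub]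
        calc |g m (y k - x k)| ≤ ‖g m‖ * ‖y k - x k‖ := by
              simpa [Real.norm_eq_abs] using (g m).le_opNorm (y k - x k)
          _ ≤ 2 * (2 * δ k) :=
              mul_le_mul (hg_norm m) (hyx k) (norm_nonneg _) (by norm_num)
      have h3 : δ k ≤ δ (m + 1) := δanti hk'
      show |g m (y k) - F (g m)| ≤ 5 * δ (m + 1)
      calc |g m (y k) - F (g m)|
          ≤ |g m (y k) - g m (x k)| + |g m (x k) - F (g m)| := by
            have := abs_sub_le (g m (y k)) (g m (x k)) (F (g m))
            linarith
        _ ≤ 2 * (2 * δ k) + δ k := by linarith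
        _ ≤ 5 * δ (m + 1) := by linarith
    exact hsub (hzN (m + 1))
  -- the contradiction estimate
  have hB : ∀ N : ℕ, Φ F ≤ 13 * δ N := by
    intro N
    obtain ⟨w, hwmem, hwz⟩ : ∃ w ∈ convexHull ℝ (y '' Set.Ici N), dist z w < δ N := by
      have hmem := hzN N
      rw [Metric.mem_closure_iff] at hmem
      obtain ⟨w, hw1, hw2⟩ := hmem (δ N) (δpos N)
      exact ⟨w, hw1, hw2⟩
    rw [convexHull_eq] at hwmem
    obtain ⟨ι, t, wgt, pts, hw0, hw1, hpts, hcm⟩ := hwmem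
    have ht : t.Nonempty := Finset.nonempty_of_sum_ne_zero (by rw [hw1]; norm_num)
    set k' : ι → ℕ := fun j => if hj : j ∈ t then (hpts j hj).choose else N with hk'def
    have hk'mem : ∀ j ∈ t, k' j ∈ Set.Ici N ∧ y (k' j) = pts j := by
      intro j hj
      rw [hk'def]
      simp only [dif_pos hj]
      obtain ⟨h1, h2⟩ := (hpts j hj).choose_spec
      exact ⟨h1, h2⟩
    set m : ℕ := t.sup k' with hmdef
    have hmN : N ≤ m := by
      obtain ⟨j₀, hj₀⟩ := ht
      exact le_trans (hk'mem j₀ hj₀).1 (Finset.le_sup hj₀)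
    set A : Set X := {v | |g m v| ≤ δ m + 4 * δ N} with hAdef
    have hApre : A = ⇑(g m) ⁻¹' (Metric.closedBall 0 (δ m + 4 * δ N)) := by
      ext v
      simp [hAdef, Metric.mem_closedBall, Real.dist_eq]
    have hAconv : Convex ℝ A := by
      rw [hApre]
      exact (convex_closedBall _ _).linear_preimage ((g m) : X →ₗ[ℝ] ℝ)
    have hptsA : ∀ j ∈ t, pts j ∈ A := by
      intro j hj
      obtain ⟨hk1, hk2⟩ := hk'mem j hj
      have hk3 : k' j ≤ m := Finset.le_sup hj
      have h1 : |g m (x (k' j))| < δ m := hkill m (k' j) hk3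
      have h2 : |g m (y (k' j)) - g m (x (k' j))| ≤ 2 * (2 * δ (k' j)) := by
        rw [← map_sub]
        calc |g m (y (k' j) - x (k' j))| ≤ ‖g m‖ * ‖y (k' j) - x (k' j)‖ := by
              simpa [Real.norm_eq_abs] using (g m).le_opNorm (y (k' j) - x (k' j))
          _ ≤ 2 * (2 * δ (k' j)) :=
              mul_le_mul (hg_norm m) (hyx _) (norm_nonneg _) (by norm_num)
      have h3 : δ (k' j) ≤ δ N := δanti hk1
      rw [← hk2]
      show |g m (y (k' j))| ≤ δ m + 4 * δ N
      calc |g m (y (k' j))| ≤ |g m (y (k' j)) - g m (x (k' j))| + |g m (x (k' j))| := by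
            have := abs_sub_abs_le_abs_sub (g m (y (k' j))) (g m (x (k' j)))
            have := abs_add_le (g m (y (k' j)) - g m (x (k' j))) (g m (x (k' j)))
            simpa using this
        _ ≤ δ m + 4 * δ N := by linarith
    have hwA : w ∈ A := by
      rw [← hAconv.convexHull_eq, ← hcm]
      exact Finset.centerMass_mem_convexHull t hw0 (by rw [hw1]; norm_num) hptsA
    -- combine
    have h1 : |g m z - g m w| ≤ 2 * δ N := by
      rw [← map_sub]
      calc |g m (z - w)| ≤ ‖g m‖ * ‖z - w‖ := by
            simpa [Real.norm_eq_abs] using (g m).le_opNorm (z - w)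
        _ ≤ 2 * δ N := by
            apply mul_le_mul (hg_norm m) ?_ (norm_nonneg _) (by norm_num)
            rw [← dist_eq_norm]
            exact hwz.le
    have h2 : |g m w| ≤ δ m + 4 * δ N := hwA
    have h3 : |g m z| ≤ δ m + 6 * δ N := by
      have := abs_sub_abs_le_abs_sub (g m z) (g m w)
      linarith
    have h4 := hA m
    have h5 := hFg m
    rw [abs_le] at h4
    rw [abs_lt] at h5
    have h6 : δ m ≤ δ N := δanti hmN
    have h7 : δ (m + 1) ≤ δ N := δanti (le_trans hmN (Nat.le_succ m))
    have h8 : g m z ≤ |g m z| := le_abs_self _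
    linarith
  obtain ⟨N, hN⟩ := δsmall (Φ F / 13) (by positivity)
  have := hB N
  nlinarith
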